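/- For all u ∈ [0,1], the derivative of g_{a₁,…,a_q} satisfies 0 ≤ g'_{a₁,…,a_q}(u) ≤ ∏_{i=2}^q max(1,aᵢ) / min(1, (∑aᵢ)/q)^q + |∑aᵢ − q| · ∏_{i=2}^q max(1,aᵢ) / min(1, (∑aᵢ)/q)^{q+1} + (∑_{i=2}^q |1−aᵢ| · ∏_{2≤j≤q, j≠i} max(1,a_j)) / min(1, (∑aᵢ)/q)^q. -/

import Mathlib

noncomputable def g (q : ℕ) (a : ℕ → ℝ) (u : ℝ) : ℝ :=
  (q : ℝ) ^ q * u * (∏ i ∈ Finset.Icc 2 q, (a i + u - a i * u)) /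
    ((∑ i ∈ Finset.Icc 1 q, a i) - ((∑ i ∈ Finset.Icc 1 q, a i) - q) * u) ^ q

set_option maxHeartbeats 1000000

lemma g_hasDerivAt (q : ℕ) (hq : 1 ≤ q) (a : ℕ → ℝ) (u : ℝ)
    (hD : (∑ i ∈ Finset.Icc 1 q, a i) - ((∑ i ∈ Finset.Icc 1 q, a i) - q) * u ≠ 0) :
    HasDerivAt (g q a)
      ((q:ℝ)^q * (((∏ i ∈ Finset.Icc 2 q, (a i + u - a i * u))
          + u * ∑ i ∈ Finset.Icc 2 q, (∏ j ∈ (Finset.Icc 2 q).erase i, (a j + u - a j * u)) * (1 - a i))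
          * ((∑ i ∈ Finset.Icc 1 q, a i) - ((∑ i ∈ Finset.Icc 1 q, a i) - q) * u)
        + q * u * (∏ i ∈ Finset.Icc 2 q, (a i + u - a i * u)) * ((∑ i ∈ Finset.Icc 1 q, a i) - q))
        / ((∑ i ∈ Finset.Icc 1 q, a i) - ((∑ i ∈ Finset.Icc 1 q, a i) - q) * u) ^ (q+1)) u := by
  set S := ∑ i ∈ Finset.Icc 1 q, a i with hS
  have hP : HasDerivAt (fun x => ∏ i ∈ Finset.Icc 2 q, (a i + x - a i * x))
      (∑ i ∈ Finset.Icc 2 q, (∏ j ∈ (Finset.Icc 2 q).erase i, (a j + u - a j * u)) * (1 - a i)) u := by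
    have := HasDerivAt.fun_finsetProd (u := Finset.Icc 2 q)
      (f := fun i x => a i + x - a i * x) (f' := fun i => 1 - a i) (x := u)
      (fun i _ => by
        simpa using (((hasDerivAt_id' u).const_add (a i)).fun_sub ((hasDerivAt_id' u).const_mul (a i))))
    simpa [smul_eq_mul] using this
  have hN : HasDerivAt (fun x => (q:ℝ)^q * x * ∏ i ∈ Finset.Icc 2 q, (a i + x - a i * x))
      ((q:ℝ)^q * (∏ i ∈ Finset.Icc 2 q, (a i + u - a i * u))
        + ((q:ℝ)^q * u) * ∑ i ∈ Finset.Icc 2 q, (∏ j ∈ (Finset.Icc 2 q).erase i, (a j + u - a j * u)) * (1 - a i)) u := by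
    have h1 : HasDerivAt (fun x : ℝ => (q:ℝ)^q * x) ((q:ℝ)^q) u := by
      simpa using (hasDerivAt_id u).const_mul ((q:ℝ)^q)
    exact h1.mul hP
  have hb : HasDerivAt (fun x => S - (S - (q:ℝ)) * x) (-(S - q)) u := by
    simpa using ((hasDerivAt_id u).const_mul (S - (q:ℝ))).const_sub S
  have hDq : HasDerivAt (fun x => (S - (S - (q:ℝ)) * x) ^ q)
      ((q:ℝ) * (S - (S - (q:ℝ)) * u) ^ (q-1) * (-(S - q))) u := hb.pow q
  have hraw := hN.div hDq (pow_ne_zero q hD)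
  have heq : ((q:ℝ)^q * (((∏ i ∈ Finset.Icc 2 q, (a i + u - a i * u))
          + u * ∑ i ∈ Finset.Icc 2 q, (∏ j ∈ (Finset.Icc 2 q).erase i, (a j + u - a j * u)) * (1 - a i))
          * (S - (S - q) * u)
        + q * u * (∏ i ∈ Finset.Icc 2 q, (a i + u - a i * u)) * (S - q))
        / (S - (S - q) * u) ^ (q+1)
      = (((q:ℝ)^q * (∏ i ∈ Finset.Icc 2 q, (a i + u - a i * u))
        + ((q:ℝ)^q * u) * ∑ i ∈ Finset.Icc 2 q, (∏ j ∈ (Finset.Icc 2 q).erase i, (a j + u - a j * u)) * (1 - a i))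
          * (S - (S - (q:ℝ)) * u) ^ q
        - ((q:ℝ)^q * u * ∏ i ∈ Finset.Icc 2 q, (a i + u - a i * u))
          * ((q:ℝ) * (S - (S - (q:ℝ)) * u) ^ (q-1) * (-(S - q))))
        / ((S - (S - (q:ℝ)) * u) ^ q) ^ 2) := by
    obtain ⟨k, rfl⟩ : (∃ k, q = k + 1) := ⟨q - 1, (Nat.succ_pred_eq_of_pos hq).symm⟩
    simp only [Nat.add_sub_cancel]
    rw [div_eq_div_iff (pow_ne_zero _ hD) (pow_ne_zero 2 (pow_ne_zero _ hD))]
    push_cast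
    ring
  rw [heq]
  exact hraw

theorem stmt_10 (q : ℕ) (hq : 1 ≤ q) (a : ℕ → ℝ)
    (ha : ∀ i ∈ Finset.Icc 1 q, 0 < a i)
    (u : ℝ) (hu : u ∈ Set.Icc (0:ℝ) 1) :
    0 ≤ deriv (g q a) u ∧
    deriv (g q a) u ≤
      (∏ i ∈ Finset.Icc 2 q, max 1 (a i)) /
        (min 1 ((∑ i ∈ Finset.Icc 1 q, a i) / q)) ^ q
      + |(∑ i ∈ Finset.Icc 1 q, a i) - q| *
          ((∏ i ∈ Finset.Icc 2 q, max 1 (a i)) /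
            (min 1 ((∑ i ∈ Finset.Icc 1 q, a i) / q)) ^ (q + 1))
      + (∑ i ∈ Finset.Icc 2 q, |1 - a i| *
          ∏ j ∈ (Finset.Icc 2 q).erase i, max 1 (a j)) /
          (min 1 ((∑ i ∈ Finset.Icc 1 q, a i) / q)) ^ q := by
  obtain ⟨hu0, hu1⟩ := hu
  have hq0 : (0:ℝ) < q := by exact_mod_cast hq
  have hs21 : Finset.Icc 2 q ⊆ Finset.Icc 1 q := Finset.Icc_subset_Icc (by norm_num) le_rfl
  have h1mem : 1 ∈ Finset.Icc 1 q := Finset.mem_Icc.2 ⟨le_rfl, hq⟩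
  -- positivity of factors
  have hd_pos : ∀ i ∈ Finset.Icc 1 q, 0 < a i + u - a i * u := by
    intro i hi
    have hai := ha i hi
    rcases lt_or_eq_of_le hu1 with h1 | h1
    · nlinarith [mul_pos hai (sub_pos.2 h1)]
    · rw [h1]; nlinarith
  have hd_le : ∀ i ∈ Finset.Icc 1 q, a i + u - a i * u ≤ max 1 (a i) := by
    intro i hi
    rcases le_total (a i) 1 with h | h
    · refine le_trans ?_ (le_max_left 1 (a i))
      nlinarith [mul_nonneg (sub_nonneg.2 h) (sub_nonneg.2 hu1)]
    · refine le_trans ?_ (le_max_right 1 (a i))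
      nlinarith [mul_nonneg hu0 (sub_nonneg.2 h)]
  have hS : (0:ℝ) < ∑ i ∈ Finset.Icc 1 q, a i := Finset.sum_pos ha ⟨1, h1mem⟩
  have hm : (0:ℝ) < min 1 ((∑ i ∈ Finset.Icc 1 q, a i) / q) :=
    lt_min one_pos (div_pos hS hq0)
  -- D lower bound
  have hDlb : (q:ℝ) * min 1 ((∑ i ∈ Finset.Icc 1 q, a i) / q)
      ≤ (∑ i ∈ Finset.Icc 1 q, a i) - ((∑ i ∈ Finset.Icc 1 q, a i) - q) * u := by
    set S := ∑ i ∈ Finset.Icc 1 q, a i with hSdef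
    rcases le_total S (q:ℝ) with h | h
    · rw [min_eq_right (by rw [div_le_one hq0]; exact h)]
      have hqq : (q:ℝ) * (S / q) = S := by field_simp
      rw [hqq]
      nlinarith [mul_nonneg (sub_nonneg.2 h) hu0]
    · rw [min_eq_left (by rw [le_div_iff₀ hq0]; linarith)]
      nlinarith [mul_nonneg (sub_nonneg.2 h) (sub_nonneg.2 hu1)]
  have hD : (0:ℝ) < (∑ i ∈ Finset.Icc 1 q, a i) - ((∑ i ∈ Finset.Icc 1 q, a i) - q) * u :=
    lt_of_lt_of_le (by positivity) hDlb
  have hDne : (∑ i ∈ Finset.Icc 1 q, a i) - ((∑ i ∈ Finset.Icc 1 q, a i) - q) * u ≠ 0 := hD.ne'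
  have hder := (g_hasDerivAt q hq a u hDne).deriv
  rw [hder]
  set S := ∑ i ∈ Finset.Icc 1 q, a i with hSdef
  set D := S - (S - (q:ℝ)) * u with hDdef
  set P := ∏ i ∈ Finset.Icc 2 q, (a i + u - a i * u) with hPdef
  set P' := ∑ i ∈ Finset.Icc 2 q,
      (∏ j ∈ (Finset.Icc 2 q).erase i, (a j + u - a j * u)) * (1 - a i) with hP'def
  set m := min 1 (S / q) with hmdef
  set M := ∏ i ∈ Finset.Icc 2 q, max 1 (a i) with hMdef
  set C := ∑ i ∈ Finset.Icc 2 q, |1 - a i| * ∏ j ∈ (Finset.Icc 2 q).erase i, max 1 (a j)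
    with hCdef
  clear_value S D P P' m M C
  have hP_pos : 0 < P := by rw [hPdef]; exact Finset.prod_pos fun i hi => hd_pos i (hs21 hi)
  have hPM : P ≤ M := by
    rw [hPdef, hMdef]
    exact Finset.prod_le_prod (fun i hi => (hd_pos i (hs21 hi)).le) fun i hi => hd_le i (hs21 hi)
  have hM0 : (0:ℝ) ≤ M := by
    rw [hMdef]
    exact Finset.prod_nonneg fun i _ => le_trans zero_le_one (le_max_left 1 (a i))
  have hC0 : (0:ℝ) ≤ C := by
    rw [hCdef]
    exact Finset.sum_nonneg fun i _ => mul_nonneg (abs_nonneg _)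
      (Finset.prod_nonneg fun j _ => le_trans zero_le_one (le_max_left 1 (a j)))
  -- Chebyshev
  have hcard : (Finset.Icc 1 q).card = q := by rw [Nat.card_Icc]; omega
  have hantiv : AntivaryOn (fun i => (1 - a i) / (a i + u - a i * u))
      (fun i => a i + u - a i * u) ↑(Finset.Icc 1 q) := by
    intro i hi j hj hlt
    simp only [Finset.mem_coe] at hi hj
    have hdi := hd_pos i hi
    have hdj := hd_pos j hj
    simp only at hlt ⊢
    have haij : a i ≤ a j := by
      by_contra hcon
      push_neg at hcon
      nlinarith [mul_nonneg (sub_nonneg.2 hu1) (sub_nonneg.2 hcon.le)]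
    rw [div_le_div_iff₀ hdj hdi]
    nlinarith [haij]
  have hcheb := hantiv.card_mul_sum_le_sum_mul_sum
  rw [hcard] at hcheb
  have hsum_ed : ∑ i ∈ Finset.Icc 1 q,
      (1 - a i) / (a i + u - a i * u) * (a i + u - a i * u) = (q:ℝ) - S := by
    rw [Finset.sum_congr rfl fun i hi => div_mul_cancel₀ (1 - a i) (hd_pos i hi).ne']
    rw [Finset.sum_sub_distrib, Finset.sum_const, hcard, hSdef]
    simp [nsmul_eq_mul]
  have hsum_d : ∑ i ∈ Finset.Icc 1 q, (a i + u - a i * u) = D := by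
    have h1 : ∑ i ∈ Finset.Icc 1 q, (a i + u - a i * u)
        = ∑ i ∈ Finset.Icc 1 q, a i + (∑ i ∈ Finset.Icc 1 q, u)
          - ∑ i ∈ Finset.Icc 1 q, a i * u := by
      rw [Finset.sum_sub_distrib, Finset.sum_add_distrib]
    rw [h1, Finset.sum_const, hcard, ← Finset.sum_mul, ← hSdef, hDdef]
    push_cast [nsmul_eq_mul]
    ring
  rw [hsum_ed, hsum_d] at hcheb
  -- split the index set
  have hs1s2 : Finset.Icc 1 q = insert 1 (Finset.Icc 2 q) := by
    ext x
    simp only [Finset.mem_Icc, Finset.mem_insert]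
    omega
  have h1not : (1 : ℕ) ∉ Finset.Icc 2 q := by simp
  have hsplit : ∑ i ∈ Finset.Icc 1 q, (1 - a i) / (a i + u - a i * u)
      = (1 - a 1) / (a 1 + u - a 1 * u)
        + ∑ i ∈ Finset.Icc 2 q, (1 - a i) / (a i + u - a i * u) := by
    rw [hs1s2, Finset.sum_insert h1not]
  have hd1 := hd_pos 1 h1mem
  have he1 : u * ((1 - a 1) / (a 1 + u - a 1 * u)) ≤ 1 := by
    rw [mul_div_assoc']
    rw [div_le_one hd1]
    nlinarith [ha 1 h1mem]
  have hstep : u * ∑ i ∈ Finset.Icc 1 q, (1 - a i) / (a i + u - a i * u)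
      ≤ 1 + u * ∑ i ∈ Finset.Icc 2 q, (1 - a i) / (a i + u - a i * u) := by
    rw [hsplit]
    nlinarith [he1]
  -- key nonnegativity
  have hX : 0 ≤ (1 + u * ∑ i ∈ Finset.Icc 2 q, (1 - a i) / (a i + u - a i * u)) * D
      + (q:ℝ) * u * (S - q) := by
    have hA := mul_le_mul_of_nonneg_right hstep hD.le
    have hB := mul_le_mul_of_nonneg_left hcheb hu0
    have e1 : (u * ∑ i ∈ Finset.Icc 1 q, (1 - a i) / (a i + u - a i * u)) * D
        = u * ((∑ i ∈ Finset.Icc 1 q, (1 - a i) / (a i + u - a i * u)) * D) := by ring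
    have e2 : u * ((q:ℝ) * ((q:ℝ) - S)) = -((q:ℝ) * u * (S - q)) := by ring
    linarith [hA, hB]
  -- relate P' to the sum of ratios
  have hPsum : P * ∑ i ∈ Finset.Icc 2 q, (1 - a i) / (a i + u - a i * u) = P' := by
    rw [Finset.mul_sum, hP'def]
    refine Finset.sum_congr rfl fun i hi => ?_
    have hdine := (hd_pos i (hs21 hi)).ne'
    have hPi : P = (a i + u - a i * u) * ∏ j ∈ (Finset.Icc 2 q).erase i, (a j + u - a j * u) := by
      rw [hPdef]; exact (Finset.mul_prod_erase _ _ hi).symm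
    rw [hPi]
    field_simp
  have hPE : (P + u * P') * D + (q:ℝ) * u * P * (S - q)
      = P * ((1 + u * ∑ i ∈ Finset.Icc 2 q, (1 - a i) / (a i + u - a i * u)) * D
          + (q:ℝ) * u * (S - q)) := by
    rw [← hPsum]
    ring
  have hInner : 0 ≤ (P + u * P') * D + (q:ℝ) * u * P * (S - q) := by
    rw [hPE]
    exact mul_nonneg hP_pos.le hX
  constructor
  · apply div_nonneg _ (by positivity)
    exact mul_nonneg (by positivity) hInner
  -- upper bound
  · have hsplit2 : (q:ℝ) ^ q * ((P + u * P') * D + (q:ℝ) * u * P * (S - q)) / D ^ (q + 1)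
        = ((q:ℝ) ^ q * P) / D ^ q
          + (((q:ℝ) ^ q * q) * (u * (P * (S - q)))) / D ^ (q + 1)
          + ((q:ℝ) ^ q * (u * P')) / D ^ q := by
      field_simp
      ring
    rw [hsplit2]
    have hqm : (0:ℝ) < (q:ℝ) * m := by positivity
    have hb1 : ((q:ℝ) ^ q * P) / D ^ q ≤ M / m ^ q := by
      have h1 : ((q:ℝ) ^ q * P) / D ^ q ≤ ((q:ℝ) ^ q * M) / ((q:ℝ) * m) ^ q :=
        div_le_div₀ (by positivity) (mul_le_mul_of_nonneg_left hPM (by positivity))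
          (by positivity) (pow_le_pow_left₀ hqm.le hDlb q)
      rwa [mul_pow, mul_div_mul_left _ _ (by positivity : ((q:ℝ) ^ q) ≠ 0)] at h1
    have huP' : u * P' ≤ C := by
      rw [hP'def, Finset.mul_sum, hCdef]
      refine Finset.sum_le_sum fun i hi => ?_
      have h0 : (0:ℝ) ≤ ∏ j ∈ (Finset.Icc 2 q).erase i, (a j + u - a j * u) :=
        Finset.prod_nonneg fun j hj =>
          (hd_pos j (hs21 (Finset.mem_of_mem_erase hj))).le
      have hle : ∏ j ∈ (Finset.Icc 2 q).erase i, (a j + u - a j * u)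
          ≤ ∏ j ∈ (Finset.Icc 2 q).erase i, max 1 (a j) :=
        Finset.prod_le_prod (fun j hj => (hd_pos j (hs21 (Finset.mem_of_mem_erase hj))).le)
          fun j hj => hd_le j (hs21 (Finset.mem_of_mem_erase hj))
      have h2 : (0:ℝ) ≤ ∏ j ∈ (Finset.Icc 2 q).erase i, max 1 (a j) :=
        Finset.prod_nonneg fun j _ => le_trans zero_le_one (le_max_left 1 (a j))
      rcases le_total 0 (1 - a i) with h | h
      · rw [abs_of_nonneg h]
        nlinarith [mul_nonneg h0 h, mul_le_mul_of_nonneg_right hle h,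
          mul_nonneg (sub_nonneg.2 hu1) (mul_nonneg h0 h)]
      · rw [abs_of_nonpos h]
        nlinarith [mul_nonneg hu0 (mul_nonneg h0 (neg_nonneg.2 h)),
          mul_nonneg (neg_nonneg.2 h) h2]
    have hb2 : ((q:ℝ) ^ q * (u * P')) / D ^ q ≤ C / m ^ q := by
      have h1 : ((q:ℝ) ^ q * (u * P')) / D ^ q ≤ ((q:ℝ) ^ q * C) / ((q:ℝ) * m) ^ q :=
        div_le_div₀ (by positivity) (mul_le_mul_of_nonneg_left huP' (by positivity))
          (by positivity) (pow_le_pow_left₀ hqm.le hDlb q)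
      rwa [mul_pow, mul_div_mul_left _ _ (by positivity : ((q:ℝ) ^ q) ≠ 0)] at h1
    have hb3 : (((q:ℝ) ^ q * q) * (u * (P * (S - q)))) / D ^ (q + 1)
        ≤ |S - (q:ℝ)| * (M / m ^ (q + 1)) := by
      have hnum : u * (P * (S - q)) ≤ M * |S - (q:ℝ)| := by
        have h1 : P * (S - q) ≤ P * |S - (q:ℝ)| :=
          mul_le_mul_of_nonneg_left (le_abs_self _) hP_pos.le
        have h2 : u * (P * (S - q)) ≤ u * (P * |S - (q:ℝ)|) :=
          mul_le_mul_of_nonneg_left h1 hu0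
        have h3 : u * (P * |S - (q:ℝ)|) ≤ 1 * (P * |S - (q:ℝ)|) :=
          mul_le_mul_of_nonneg_right hu1 (mul_nonneg hP_pos.le (abs_nonneg _))
        have h4 : P * |S - (q:ℝ)| ≤ M * |S - (q:ℝ)| :=
          mul_le_mul_of_nonneg_right hPM (abs_nonneg _)
        linarith
      have h1 : (((q:ℝ) ^ q * q) * (u * (P * (S - q)))) / D ^ (q + 1)
          ≤ (((q:ℝ) ^ q * q) * (M * |S - (q:ℝ)|)) / ((q:ℝ) * m) ^ (q + 1) :=
        div_le_div₀ (by positivity) (mul_le_mul_of_nonneg_left hnum (by positivity))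
          (by positivity) (pow_le_pow_left₀ hqm.le hDlb (q + 1))
      have h2 : (((q:ℝ) ^ q * q) * (M * |S - (q:ℝ)|)) / ((q:ℝ) * m) ^ (q + 1)
          = |S - (q:ℝ)| * (M / m ^ (q + 1)) := by
        rw [mul_pow, ← pow_succ]
        rw [mul_div_mul_left _ _ (by positivity : ((q:ℝ) ^ (q + 1)) ≠ 0)]
        rw [mul_comm M, mul_div_assoc]
      rwa [h2] at h1
    exact add_le_add (add_le_add hb1 hb3) hb2
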